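/- arXiv:1307.1169 — 2 statements merged into one kernel-verified Lean document; each statement's English description precedes it below -/
import Mathlib

section
/- Every graph with a maximal planar (i.e., 2-quasiplanar) convex geometric representation has a semi-bar visibility (k = 0) representation with semi-bars of different lengths. Combinatorially: if E is a maximal noncrossing set of chords on vertices 1, …, n in convex position, then there exists an injective length function ℓ : {1,…,n} → ℝ such that for all i < j, {i,j} ∈ E iff every t with i < t < j satisfies ℓ(t) < min(ℓ(i), ℓ(j)). -/
open Finset
open scoped Classical

variable {n : ℕ}

/-- In a linear semi-bar representation (bars `0, …, n-1` from bottom to top), the number of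
bars strictly between `i` and `j` that are longer than the shorter of the two. -/
noncomputable def btwCount (ℓ : Fin n → ℝ) (i j : Fin n) : ℕ :=
  (univ.filter fun t => min i j < t ∧ t < max i j ∧ min (ℓ i) (ℓ j) < ℓ t).card

/-- Linear semi-bar `k`-visibility adjacency. -/
noncomputable def LinAdj (k : ℕ) (ℓ : Fin n → ℝ) (i j : Fin n) : Prop :=
  i ≠ j ∧ btwCount ℓ i j ≤ k

/-- `t` lies strictly between `a` and `b` (vertices `0, …, n-1` in convex position). -/
def BetweenF (a b t : Fin n) : Prop := min a b < t ∧ t < max a b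

/-- Chords `{a,b}` and `{c,d}` of the convex polygon cross (all endpoints distinct and the
endpoints interleave). -/
def CrossesF (a b c d : Fin n) : Prop :=
  a ≠ b ∧ c ≠ d ∧ a ≠ c ∧ a ≠ d ∧ b ≠ c ∧ b ≠ d ∧
    Xor' (BetweenF a b c) (BetweenF a b d)

def QuasiPlanarF (m : ℕ) (G : SimpleGraph (Fin n)) : Prop :=
  ¬ ∃ f g : Fin m → Fin n, (∀ p, G.Adj (f p) (g p)) ∧
      ∀ p q, p ≠ q → CrossesF (f p) (g p) (f q) (g q)

def MaximalQPF (m : ℕ) (G : SimpleGraph (Fin n)) : Prop :=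
  ∀ a b : Fin n, a ≠ b → ¬ G.Adj a b →
    ¬ QuasiPlanarF m (G ⊔ SimpleGraph.fromEdgeSet {s(a, b)})

/-! ### Auxiliary machinery -/

lemma val_min' (a b : Fin n) : (min a b).val = min a.val b.val := by
  rcases le_total a b with h | h
  · rw [min_eq_left h, min_eq_left (Fin.le_def.mp h)]
  · rw [min_eq_right h, min_eq_right (Fin.le_def.mp h)]

lemma val_max' (a b : Fin n) : (max a b).val = max a.val b.val := by
  rcases le_total a b with h | h
  · rw [max_eq_right h, max_eq_right (Fin.le_def.mp h)]
  · rw [max_eq_left h, max_eq_left (Fin.le_def.mp h)]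

lemma betweenF_val {a b t : Fin n} :
    BetweenF a b t ↔ (a.val < t.val ∧ t.val < b.val) ∨ (b.val < t.val ∧ t.val < a.val) := by
  unfold BetweenF
  rw [Fin.lt_def, Fin.lt_def, val_min', val_max', Nat.min_def, Nat.max_def]
  split_ifs <;> omega

lemma crossesF_symm {a b c d : Fin n} (h : CrossesF a b c d) : CrossesF c d a b := by
  obtain ⟨h1, h2, h3, h4, h5, h6, h7⟩ := h
  refine ⟨h2, h1, h3.symm, h5.symm, h4.symm, h6.symm, ?_⟩
  simp only [ne_eq, ← Fin.val_eq_val] at h1 h2 h3 h4 h5 h6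
  simp only [Xor', Xor, betweenF_val] at h7 ⊢
  omega

lemma crossesF_swapl {a b c d : Fin n} (h : CrossesF a b c d) : CrossesF b a c d := by
  obtain ⟨h1, h2, h3, h4, h5, h6, h7⟩ := h
  refine ⟨h1.symm, h2, h5, h6, h3, h4, ?_⟩
  simp only [Xor', Xor, betweenF_val] at h7 ⊢
  omega

/-- The set of (ordered, increasing) edges of `E` strictly spanning `v`. -/
noncomputable def SpanSet (E : SimpleGraph (Fin n)) (v : Fin n) : Finset (Fin n × Fin n) :=
  univ.filter fun p => p.1 < v ∧ v < p.2 ∧ E.Adj p.1 p.2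

lemma mem_SpanSet {E : SimpleGraph (Fin n)} {v : Fin n} {p : Fin n × Fin n} :
    p ∈ SpanSet E v ↔ p.1 < v ∧ v < p.2 ∧ E.Adj p.1 p.2 := by
  simp [SpanSet]

/-- Depth of a vertex: number of edges strictly spanning it. -/
noncomputable def Dd (E : SimpleGraph (Fin n)) (v : Fin n) : ℕ := (SpanSet E v).card

lemma noncross_of {E : SimpleGraph (Fin n)} (hq : QuasiPlanarF 2 E) :
    ∀ a b c d : Fin n, E.Adj a b → E.Adj c d → ¬ CrossesF a b c d := by
  intro a b c d hab hcd hcr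
  refine hq ⟨![a, c], ![b, d], ?_, ?_⟩
  · intro p; fin_cases p <;> simpa using (by first | exact hab | exact hcd)
  · intro p q hpq
    fin_cases p <;> fin_cases q <;>
      first
        | exact absurd rfl hpq
        | simpa using hcr
        | simpa using crossesF_symm hcr

lemma exists_cross {E : SimpleGraph (Fin n)} (hq : QuasiPlanarF 2 E) (hmax : MaximalQPF 2 E)
    {i j : Fin n} (hne : i ≠ j) (hnadj : ¬ E.Adj i j) :
    ∃ c d : Fin n, E.Adj c d ∧ CrossesF i j c d := by
  have h := hmax i j hne hnadj
  rw [QuasiPlanarF, not_not] at h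
  obtain ⟨f, g, hadj, hcr⟩ := h
  have h01 : CrossesF (f 0) (g 0) (f 1) (g 1) := hcr 0 1 (by decide)
  have h0 := hadj 0
  have h1 := hadj 1
  simp only [SimpleGraph.sup_adj, SimpleGraph.fromEdgeSet_adj, Set.mem_singleton_iff] at h0 h1
  rcases h0 with h0 | h0
  · rcases h1 with h1 | h1
    · exact absurd h01 (noncross_of hq _ _ _ _ h0 h1)
    · rcases Sym2.eq_iff.mp h1.1 with ⟨hf, hg⟩ | ⟨hf, hg⟩
      · rw [hf, hg] at h01
        exact ⟨f 0, g 0, h0, crossesF_symm h01⟩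
      · rw [hf, hg] at h01
        exact ⟨f 0, g 0, h0, crossesF_swapl (crossesF_symm h01)⟩
  · rcases h1 with h1 | h1
    · rcases Sym2.eq_iff.mp h0.1 with ⟨hf, hg⟩ | ⟨hf, hg⟩
      · rw [hf, hg] at h01
        exact ⟨f 1, g 1, h1, h01⟩
      · rw [hf, hg] at h01
        exact ⟨f 1, g 1, h1, crossesF_swapl h01⟩
    · exfalso
      obtain ⟨-, -, h3, h4, h5, h6, -⟩ := h01
      rcases Sym2.eq_iff.mp h0.1 with ⟨hf0, hg0⟩ | ⟨hf0, hg0⟩ <;>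
        rcases Sym2.eq_iff.mp h1.1 with ⟨hf1, hg1⟩ | ⟨hf1, hg1⟩ <;>
          simp_all

section Claims

variable {E : SimpleGraph (Fin n)}
  (hnc : ∀ a b c d : Fin n, E.Adj a b → E.Adj c d → ¬ CrossesF a b c d)

include hnc

/-- Claim A: for an edge `{i,j}` and `t` strictly between, `t` is strictly deeper. -/
lemma claimA {i j t : Fin n} (hadj : E.Adj i j) (hij : i < j) (ht1 : i < t) (ht2 : t < j) :
    Dd E i < Dd E t ∧ Dd E j < Dd E t := by
  have hijv := Fin.lt_def.mp hij
  have ht1v := Fin.lt_def.mp ht1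
  have ht2v := Fin.lt_def.mp ht2
  constructor
  · have hsub : insert (i, j) (SpanSet E i) ⊆ SpanSet E t := by
      intro p hp
      rcases Finset.mem_insert.mp hp with rfl | hp
      · exact mem_SpanSet.mpr ⟨ht1, ht2, hadj⟩
      · obtain ⟨ha, hb, hab⟩ := mem_SpanSet.mp hp
        have hav := Fin.lt_def.mp ha
        have hbv := Fin.lt_def.mp hb
        refine mem_SpanSet.mpr ⟨ha.trans ht1, ?_, hab⟩
        by_contra hle
        have hlev : p.2.val ≤ t.val := Fin.le_def.mp (not_lt.mp hle)
        refine hnc p.1 p.2 i j hab hadj ?_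
        simp only [CrossesF, Xor', Xor, betweenF_val, ne_eq, ← Fin.val_eq_val]
        omega
    have hnm : (i, j) ∉ SpanSet E i := by
      intro hmem
      exact absurd (mem_SpanSet.mp hmem).1 (lt_irrefl i)
    have := Finset.card_le_card hsub
    rw [Finset.card_insert_of_notMem hnm] at this
    unfold Dd
    omega
  · have hsub : insert (i, j) (SpanSet E j) ⊆ SpanSet E t := by
      intro p hp
      rcases Finset.mem_insert.mp hp with rfl | hp
      · exact mem_SpanSet.mpr ⟨ht1, ht2, hadj⟩
      · obtain ⟨ha, hb, hab⟩ := mem_SpanSet.mp hp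
        have hav := Fin.lt_def.mp ha
        have hbv := Fin.lt_def.mp hb
        refine mem_SpanSet.mpr ⟨?_, ht2.trans hb, hab⟩
        by_contra hle
        have hlev : t.val ≤ p.1.val := Fin.le_def.mp (not_lt.mp hle)
        refine hnc p.1 p.2 i j hab hadj ?_
        simp only [CrossesF, Xor', Xor, betweenF_val, ne_eq, ← Fin.val_eq_val]
        omega
    have hnm : (i, j) ∉ SpanSet E j := by
      intro hmem
      exact absurd (mem_SpanSet.mp hmem).2.1 (lt_irrefl j)
    have := Finset.card_le_card hsub
    rw [Finset.card_insert_of_notMem hnm] at this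
    unfold Dd
    omega

/-- Claim B auxiliary: a vertex of a crossing edge that lies strictly between `i` and `j`
is strictly shallower than one of the endpoints. -/
lemma claimB_aux {i j c d : Fin n} (hij : i < j) (hcd : E.Adj c d)
    (hd1 : d ≠ i) (hd2 : d ≠ j) (hcne : c ≠ d)
    (hc : BetweenF i j c) (hd : ¬ BetweenF i j d) :
    i < c ∧ c < j ∧ (Dd E c < Dd E i ∨ Dd E c < Dd E j) := by
  have hijv := Fin.lt_def.mp hij
  rw [betweenF_val] at hc hd
  simp only [ne_eq, ← Fin.val_eq_val] at hd1 hd2 hcne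
  have hic : i < c := Fin.lt_def.mpr (by omega)
  have hcj : c < j := Fin.lt_def.mpr (by omega)
  have hicv := Fin.lt_def.mp hic
  have hcjv := Fin.lt_def.mp hcj
  refine ⟨hic, hcj, ?_⟩
  have hdor : d.val < i.val ∨ j.val < d.val := by omega
  rcases hdor with hdv | hdv
  · -- d is left of i : every edge spanning c spans i, and (d, c) spans i but not c
    left
    have hsub : insert (d, c) (SpanSet E c) ⊆ SpanSet E i := by
      intro p hp
      rcases Finset.mem_insert.mp hp with rfl | hp
      · exact mem_SpanSet.mpr ⟨Fin.lt_def.mpr hdv, hic, hcd.symm⟩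
      · obtain ⟨ha, hb, hab⟩ := mem_SpanSet.mp hp
        have hav := Fin.lt_def.mp ha
        have hbv := Fin.lt_def.mp hb
        refine mem_SpanSet.mpr ⟨?_, Fin.lt_def.mpr (by omega), hab⟩
        by_contra hle
        have hlev : i.val ≤ p.1.val := Fin.le_def.mp (not_lt.mp hle)
        refine hnc p.1 p.2 c d hab hcd ?_
        simp only [CrossesF, Xor', Xor, betweenF_val, ne_eq, ← Fin.val_eq_val]
        omega
    have hnm : (d, c) ∉ SpanSet E c := by
      intro hmem
      exact absurd (mem_SpanSet.mp hmem).2.1 (lt_irrefl c)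
    have := Finset.card_le_card hsub
    rw [Finset.card_insert_of_notMem hnm] at this
    unfold Dd
    omega
  · -- d is right of j : every edge spanning c spans j, and (c, d) spans j but not c
    right
    have hsub : insert (c, d) (SpanSet E c) ⊆ SpanSet E j := by
      intro p hp
      rcases Finset.mem_insert.mp hp with rfl | hp
      · exact mem_SpanSet.mpr ⟨hcj, Fin.lt_def.mpr hdv, hcd⟩
      · obtain ⟨ha, hb, hab⟩ := mem_SpanSet.mp hp
        have hav := Fin.lt_def.mp ha
        have hbv := Fin.lt_def.mp hb
        refine mem_SpanSet.mpr ⟨Fin.lt_def.mpr (by omega), ?_, hab⟩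
        by_contra hle
        have hlev : p.2.val ≤ j.val := Fin.le_def.mp (not_lt.mp hle)
        refine hnc p.1 p.2 c d hab hcd ?_
        simp only [CrossesF, Xor', Xor, betweenF_val, ne_eq, ← Fin.val_eq_val]
        omega
    have hnm : (c, d) ∉ SpanSet E c := by
      intro hmem
      exact absurd (mem_SpanSet.mp hmem).1 (lt_irrefl c)
    have := Finset.card_le_card hsub
    rw [Finset.card_insert_of_notMem hnm] at this
    unfold Dd
    omega

/-- Claim B: a crossing edge yields a shallow vertex strictly between `i` and `j`. -/
lemma claimB {i j c d : Fin n} (hij : i < j) (hcd : E.Adj c d) (hcr : CrossesF i j c d) :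
    ∃ t : Fin n, i < t ∧ t < j ∧ (Dd E t < Dd E i ∨ Dd E t < Dd E j) := by
  obtain ⟨-, hcdne, hic, hid, hjc, hjd, hxor⟩ := hcr
  rcases hxor with ⟨hbc, hbd⟩ | ⟨hbd, hbc⟩
  · obtain ⟨h1, h2, h3⟩ := claimB_aux hnc hij hcd (Ne.symm hid) (Ne.symm hjd) hcdne hbc hbd
    exact ⟨c, h1, h2, h3⟩
  · obtain ⟨h1, h2, h3⟩ := claimB_aux hnc hij hcd.symm (Ne.symm hic) (Ne.symm hjc)
      (Ne.symm hcdne) hbd hbc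
    exact ⟨d, h1, h2, h3⟩

end Claims

/-- The length function: small index-based perturbation minus depth. -/
noncomputable def ellF (E : SimpleGraph (Fin n)) (v : Fin n) : ℝ :=
  (v.val : ℝ) / n - (Dd E v : ℝ)

lemma ellF_frac_nonneg (E : SimpleGraph (Fin n)) (v : Fin n) : (0 : ℝ) ≤ (v.val : ℝ) / n := by
  positivity

lemma ellF_frac_lt_one (E : SimpleGraph (Fin n)) (v : Fin n) : ((v.val : ℝ)) / n < 1 := by
  rw [div_lt_one (by exact_mod_cast v.pos)]
  exact_mod_cast v.isLt

/-- every maximal planar (2-quasiplanar) convex geometric representation has a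
semi-bar visibility (`k = 0`) representation with semi-bars of different lengths. -/
theorem stmt10 (E : SimpleGraph (Fin n)) (hq : QuasiPlanarF 2 E) (hmax : MaximalQPF 2 E) :
    ∃ ℓ : Fin n → ℝ, Function.Injective ℓ ∧
      ∀ i j : Fin n, i < j →
        (E.Adj i j ↔ ∀ t : Fin n, i < t → t < j → ℓ t < min (ℓ i) (ℓ j)) := by
  have hnc := noncross_of hq
  refine ⟨ellF E, ?_, ?_⟩
  · -- injectivity
    intro u v huv
    unfold ellF at huv
    have hu0 := ellF_frac_nonneg E u
    have hv0 := ellF_frac_nonneg E v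
    have hu1 := ellF_frac_lt_one E u
    have hv1 := ellF_frac_lt_one E v
    have hD : Dd E u = Dd E v := by
      rcases lt_trichotomy (Dd E u) (Dd E v) with hlt | he | hlt
      · exfalso
        have : (Dd E u : ℝ) + 1 ≤ (Dd E v : ℝ) := by exact_mod_cast hlt
        linarith
      · exact he
      · exfalso
        have : (Dd E v : ℝ) + 1 ≤ (Dd E u : ℝ) := by exact_mod_cast hlt
        linarith
    have hfrac : (u.val : ℝ) / n = (v.val : ℝ) / n := by
      rw [hD] at huv
      linarith
    have hn' : (0 : ℝ) < n := by exact_mod_cast u.pos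
    rw [div_eq_div_iff hn'.ne' hn'.ne'] at hfrac
    have hval := mul_right_cancel₀ hn'.ne' hfrac
    exact Fin.val_injective (by exact_mod_cast hval)
  · intro i j hij
    constructor
    · intro hadj t ht1 ht2
      obtain ⟨hDi, hDj⟩ := claimA hnc hadj hij ht1 ht2
      have hi0 := ellF_frac_nonneg E i
      have hj0 := ellF_frac_nonneg E j
      have ht1' := ellF_frac_lt_one E t
      have hci : (Dd E i : ℝ) + 1 ≤ (Dd E t : ℝ) := by exact_mod_cast hDi
      have hcj : (Dd E j : ℝ) + 1 ≤ (Dd E t : ℝ) := by exact_mod_cast hDj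
      refine lt_min ?_ ?_ <;> unfold ellF <;> linarith
    · intro hvis
      by_contra hnadj
      obtain ⟨c, d, hcd, hcr⟩ := exists_cross hq hmax (ne_of_lt hij) hnadj
      obtain ⟨t, ht1, ht2, hcase⟩ := claimB hnc hij hcd hcr
      have hv := hvis t ht1 ht2
      have ht0 := ellF_frac_nonneg E t
      have hi1 := ellF_frac_lt_one E i
      have hj1 := ellF_frac_lt_one E j
      rcases hcase with h | h
      · have hc : (Dd E t : ℝ) + 1 ≤ (Dd E i : ℝ) := by exact_mod_cast h
        have := min_le_left (ellF E i) (ellF E j)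
        unfold ellF at hv this
        linarith
      · have hc : (Dd E t : ℝ) + 1 ≤ (Dd E j : ℝ) := by exact_mod_cast h
        have := min_le_right (ellF E i) (ellF E j)
        unfold ellF at hv this
        linarith
end

section
/- Every (2k+2)-degenerate graph with a maximal (k+2)-quasiplanar convex geometric representation has a cylindrical semi-bar k-visibility representation with semi-bars of different lengths, preserving the cyclic order of vertices. Combinatorially: if E is a maximal (k+2)-quasiplanar set of chords on ZMod n and the graph (ZMod n, E) is (2k+2)-degenerate, then there exists an injective ℓ : ZMod n → ℝ such that for all i ≠ j, {i,j} ∈ E iff on one of the two cyclic open arcs between i and j, at most k vertices t have ℓ(t) > min(ℓ(i), ℓ(j)). -/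
open Finset
open scoped Classical

variable {n : ℕ}

/-- The open cyclic arc from `i` to `j` (going in the positive direction), excluding both. -/
def Arc [NeZero n] (i j : ZMod n) : Finset (ZMod n) :=
  univ.filter fun t => 0 < (t - i).val ∧ (t - i).val < (j - i).val

/-- Number of bars on the open arc from `i` to `j` strictly longer than the shorter of `i, j`. -/
noncomputable def exceedCount [NeZero n] (ℓ : ZMod n → ℝ) (i j : ZMod n) : ℕ :=
  ((Arc i j).filter fun t => min (ℓ i) (ℓ j) < ℓ t).card

/-- The cylindrical semi-bar `k`-visibility graph: `i ≠ j` are adjacent iff on one of the two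
open cyclic arcs between them at most `k` bars are longer than `min (ℓ i) (ℓ j)`. -/
noncomputable def CylGraph (k : ℕ) [NeZero n] (ℓ : ZMod n → ℝ) : SimpleGraph (ZMod n) where
  Adj i j := i ≠ j ∧ (exceedCount ℓ i j ≤ k ∨ exceedCount ℓ j i ≤ k)
  symm := ⟨fun i j h => ⟨h.1.symm, h.2.symm⟩⟩
  loopless := ⟨fun i h => h.1 rfl⟩

noncomputable instance (k : ℕ) [NeZero n] (ℓ : ZMod n → ℝ) :
    DecidableRel (CylGraph k ℓ).Adj := Classical.decRel _

/-- Two chords `{a,b}` and `{c,d}` with all four endpoints distinct cross iff exactly one of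
`c, d` lies on the open cyclic arc from `a` to `b`. -/
def Crosses [NeZero n] (a b c d : ZMod n) : Prop :=
  a ≠ b ∧ c ≠ d ∧ a ≠ c ∧ a ≠ d ∧ b ≠ c ∧ b ≠ d ∧
    Xor' (c ∈ Arc a b) (d ∈ Arc a b)

/-- A convex geometric representation (edges drawn as chords of the cyclic order on `ZMod n`)
is `m`-quasiplanar if it has no `m` pairwise crossing edges. -/
def QuasiPlanar (m : ℕ) [NeZero n] (G : SimpleGraph (ZMod n)) : Prop :=
  ¬ ∃ f g : Fin m → ZMod n, (∀ p, G.Adj (f p) (g p)) ∧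
      ∀ p q, p ≠ q → Crosses (f p) (g p) (f q) (g q)

/-- Maximality: adding any absent chord creates `m` pairwise crossing edges. -/
def MaximalQP (m : ℕ) [NeZero n] (G : SimpleGraph (ZMod n)) : Prop :=
  ∀ a b : ZMod n, a ≠ b → ¬ G.Adj a b →
    ¬ QuasiPlanar m (G ⊔ SimpleGraph.fromEdgeSet {s(a, b)})

lemma mem_Arc [NeZero n] {i j t : ZMod n} :
    t ∈ Arc i j ↔ 0 < (t - i).val ∧ (t - i).val < (j - i).val := by
  simp [Arc]

lemma val_pos_iff [NeZero n] {x : ZMod n} : 0 < x.val ↔ x ≠ 0 := by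
  rw [Nat.pos_iff_ne_zero, not_iff_not, ZMod.val_eq_zero]

lemma self_not_mem_Arc_left [NeZero n] {i j : ZMod n} : i ∉ Arc i j := by
  simp [mem_Arc]

lemma self_not_mem_Arc_right [NeZero n] {i j : ZMod n} : j ∉ Arc i j := by
  simp [mem_Arc]

lemma val_neg' [NeZero n] {x : ZMod n} (hx : x ≠ 0) : (-x).val = n - x.val := by
  haveI : NeZero x := ⟨hx⟩
  exact ZMod.val_neg_of_ne_zero x

/-- L1 -/
lemma mem_Arc_rev [NeZero n] {a b c : ZMod n} (hab : a ≠ b) (hca : c ≠ a) (hcb : c ≠ b) :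
    c ∈ Arc a b ↔ c ∉ Arc b a := by
  have hd : c - a ≠ 0 := sub_ne_zero.mpr hca
  have hb : b - a ≠ 0 := sub_ne_zero.mpr (Ne.symm hab)
  have hcb' : c - b ≠ 0 := sub_ne_zero.mpr hcb
  set x := (c - a).val with hxdef
  set y := (b - a).val with hydef
  have hx : 0 < x := val_pos_iff.mpr hd
  have hy : 0 < y := val_pos_iff.mpr hb
  have hxn : x < n := ZMod.val_lt _
  have hyn : y < n := ZMod.val_lt _
  have hxy : x ≠ y := fun h => hcb (by
    have : c - a = b - a := ZMod.val_injective n h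
    have := sub_left_injective.eq_iff.mp this
    exact this)
  have hab' : (a - b).val = n - y := by
    have : a - b = -(b - a) := by ring
    rw [this, val_neg' hb]
  have hcbv : (c - b).val = if y ≤ x then x - y else x + (n - y) := by
    have hsub : c - b = (c - a) - (b - a) := by ring
    split_ifs with h
    · rw [hsub, ZMod.val_sub h]
    · push_neg at h
      have : c - b = -((b - a) - (c - a)) := by ring
      rw [this, val_neg' (by
        intro h0
        exact hxy (congrArg ZMod.val (sub_eq_zero.mp h0)).symm)]
      rw [ZMod.val_sub (le_of_lt h)]
      omega
  constructor
  · rintro h hrev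
    rw [mem_Arc] at h hrev
    rw [hcbv, hab'] at hrev
    rcases h with ⟨-, h2⟩
    rw [if_neg (by omega)] at hrev
    omega
  · intro h
    rw [mem_Arc] at h ⊢
    refine ⟨hx, ?_⟩
    by_contra hlt
    apply h
    rw [hcbv, hab', if_pos (by omega)]
    omega

/-- From m pairwise crossing chords all crossing chord (x,y), with endpoints in S,
both arcs of (x,y) contain ≥ m points of S. -/
lemma crossing_bound [NeZero n] {m : ℕ} {x y : ZMod n} {S : Finset (ZMod n)}
    (e : Fin m → ZMod n × ZMod n)
    (hS : ∀ p, (e p).1 ∈ S ∧ (e p).2 ∈ S)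
    (hc : ∀ p, Crosses x y (e p).1 (e p).2)
    (hp : ∀ p q, p ≠ q → Crosses (e p).1 (e p).2 (e q).1 (e q).2) :
    m ≤ ((Arc x y) ∩ S).card ∧ m ≤ ((Arc y x) ∩ S).card := by
  classical
  -- chosen endpoint in Arc x y
  set f : Fin m → ZMod n := fun p => if (e p).1 ∈ Arc x y then (e p).1 else (e p).2 with hf
  set g : Fin m → ZMod n := fun p => if (e p).1 ∈ Arc x y then (e p).2 else (e p).1 with hg
  have hfg : ∀ p, (f p = (e p).1 ∧ g p = (e p).2) ∨ (f p = (e p).2 ∧ g p = (e p).1) := by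
    intro p; by_cases h : (e p).1 ∈ Arc x y
    · left; simp [hf, hg, h]
    · right; simp [hf, hg, h]
  have hfmem : ∀ p, f p ∈ Arc x y := by
    intro p
    obtain ⟨-, -, -, -, -, -, hx⟩ := hc p
    by_cases h : (e p).1 ∈ Arc x y
    · simpa [hf, h] using h
    · simp only [hf, if_neg h]
      rcases hx with ⟨h1, -⟩ | ⟨h1, h2⟩
      · exact absurd h1 h
      · exact h1
  have hne : ∀ p q, p ≠ q → f p ≠ f q ∧ g p ≠ g q := by
    intro p q hpq
    obtain ⟨-, -, h11, h12, h21, h22, -⟩ := hp p q hpq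
    rcases hfg p with ⟨hp1, hp2⟩ | ⟨hp1, hp2⟩ <;> rcases hfg q with ⟨hq1, hq2⟩ | ⟨hq1, hq2⟩ <;>
      rw [hp1, hp2, hq1, hq2] <;> exact ⟨by assumption, by assumption⟩
  have hgmem : ∀ p, g p ∈ Arc y x := by
    intro p
    obtain ⟨hxy, hcd, hxc, hxd, hyc, hyd, hx⟩ := hc p
    have hnot : g p ∉ Arc x y := by
      by_cases h : (e p).1 ∈ Arc x y
      · simp only [hg, if_pos h]
        rcases hx with ⟨-, h2⟩ | ⟨-, hna⟩
        · exact h2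
        · exact absurd h hna
      · simp only [hg, if_neg h]; exact h
    have hgx : g p ≠ x := by
      rcases hfg p with ⟨-, h2⟩ | ⟨-, h2⟩ <;> rw [h2]
      · exact hxd.symm
      · exact hxc.symm
    have hgy : g p ≠ y := by
      rcases hfg p with ⟨-, h2⟩ | ⟨-, h2⟩ <;> rw [h2]
      · exact hyd.symm
      · exact hyc.symm
    exact (mem_Arc_rev hxy.symm hgy hgx).mpr hnot
  have hfS : ∀ p, f p ∈ S := by
    intro p; rcases hfg p with ⟨h1, -⟩ | ⟨h1, -⟩ <;> rw [h1]
    · exact (hS p).1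
    · exact (hS p).2
  have hgS : ∀ p, g p ∈ S := by
    intro p; rcases hfg p with ⟨-, h1⟩ | ⟨-, h1⟩ <;> rw [h1]
    · exact (hS p).2
    · exact (hS p).1
  constructor
  · have := Finset.card_le_card_of_injOn (s := (univ : Finset (Fin m))) (t := Arc x y ∩ S) f
      (fun p _ => Finset.mem_inter.mpr ⟨hfmem p, hfS p⟩)
      (fun p _ q _ h => by_contra fun hne' => (hne p q hne').1 h)
    simpa using this
  · have := Finset.card_le_card_of_injOn (s := (univ : Finset (Fin m))) (t := Arc y x ∩ S) g
      (fun p _ => Finset.mem_inter.mpr ⟨hgmem p, hgS p⟩)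
      (fun p _ q _ h => by_contra fun hne' => (hne p q hne').2 h)
    simpa using this

section Rank
variable [NeZero n]

noncomputable def rk (S : Finset (ZMod n)) (v u : ZMod n) : ℕ := ((Arc v u) ∩ S).card
noncomputable def crk (S : Finset (ZMod n)) (v u : ZMod n) : ℕ := ((Arc u v) ∩ S).card

lemma mem_Arc_iff_val {v u t : ZMod n} (ht : t ≠ v) :
    t ∈ Arc v u ↔ (t - v).val < (u - v).val := by
  rw [mem_Arc]
  have : 0 < (t - v).val := val_pos_iff.mpr (sub_ne_zero.mpr ht)
  omega

lemma eq_of_sub_val_eq {u u' v : ZMod n} (h : (u - v).val = (u' - v).val) : u = u' :=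
  sub_left_inj.mp (ZMod.val_injective n h)

lemma arc_trans {v a b t : ZMod n} (h1 : t ∈ Arc v a) (h2 : a ∈ Arc v b) : t ∈ Arc v b := by
  rw [mem_Arc] at h1 h2 ⊢
  omega

lemma rk_lt_rk {S : Finset (ZMod n)} {v u u' : ZMod n}
    (hu : u ∈ S) (hune : u ≠ v) (hu' : u' ∈ S) (hu'ne : u' ≠ v) :
    u ∈ Arc v u' ↔ rk S v u < rk S v u' := by
  have key : ∀ a b : ZMod n, a ∈ S → a ∈ Arc v b → rk S v a < rk S v b := by
    intro a b ha hmem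
    apply Finset.card_lt_card
    rw [Finset.ssubset_iff_of_subset (fun t ht => by
      rw [Finset.mem_inter] at ht ⊢
      exact ⟨arc_trans ht.1 hmem, ht.2⟩)]
    exact ⟨a, Finset.mem_inter.mpr ⟨hmem, ha⟩, by
      simp [Finset.mem_inter, self_not_mem_Arc_right]⟩
  constructor
  · exact fun h => key u u' hu h
  · intro hlt
    rcases lt_trichotomy ((u - v).val) ((u' - v).val) with h | h | h
    · exact (mem_Arc_iff_val hune).mpr h
    · exact absurd (congrArg (rk S v) (eq_of_sub_val_eq h)) (by omega)
    · have := key u' u hu' ((mem_Arc_iff_val hu'ne).mpr h)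
      omega

lemma rk_injOn {S : Finset (ZMod n)} {v : ZMod n} : Set.InjOn (rk S v) (S.erase v) := by
  intro u hu u' hu' h
  simp only [Finset.coe_erase, Set.mem_diff, Finset.mem_coe, Set.mem_singleton_iff] at hu hu'
  rcases lt_trichotomy ((u - v).val) ((u' - v).val) with hh | hh | hh
  · have := (rk_lt_rk hu.1 hu.2 hu'.1 hu'.2).mp ((mem_Arc_iff_val hu.2).mpr hh); omega
  · exact eq_of_sub_val_eq hh
  · have := (rk_lt_rk hu'.1 hu'.2 hu.1 hu.2).mp ((mem_Arc_iff_val hu'.2).mpr hh); omega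

lemma rk_lt_N {S : Finset (ZMod n)} {v u : ZMod n} (hv : v ∈ S) (hu : u ∈ S) (hune : u ≠ v) :
    rk S v u < (S.erase v).card := by
  have hsub : Arc v u ∩ S ⊆ (S.erase v).erase u := by
    intro t ht
    rw [Finset.mem_inter] at ht
    have htv : t ≠ v := fun h => self_not_mem_Arc_left (h ▸ ht.1)
    have htu : t ≠ u := fun h => self_not_mem_Arc_right (h ▸ ht.1)
    exact Finset.mem_erase.mpr ⟨htu, Finset.mem_erase.mpr ⟨htv, ht.2⟩⟩
  have h1 := Finset.card_le_card hsub
  have h2 : ((S.erase v).erase u).card = (S.erase v).card - 1 :=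
    Finset.card_erase_of_mem (Finset.mem_erase.mpr ⟨hune, hu⟩)
  have h3 : 0 < (S.erase v).card :=
    Finset.card_pos.mpr ⟨u, Finset.mem_erase.mpr ⟨hune, hu⟩⟩
  rw [rk]; omega

lemma rk_image {S : Finset (ZMod n)} {v : ZMod n} (hv : v ∈ S) :
    (S.erase v).image (rk S v) = Finset.range ((S.erase v).card) := by
  apply Finset.eq_of_subset_of_card_le
  · intro m hm
    rw [Finset.mem_image] at hm
    obtain ⟨u, hu, hrk⟩ := hm
    rw [Finset.mem_erase] at hu
    exact Finset.mem_range.mpr (hrk ▸ rk_lt_N hv hu.2 hu.1)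
  · rw [Finset.card_range, Finset.card_image_of_injOn rk_injOn]

lemma rk_add_crk {S : Finset (ZMod n)} {v u : ZMod n} (hv : v ∈ S) (hu : u ∈ S) (hune : u ≠ v) :
    rk S v u + crk S v u + 2 = S.card := by
  classical
  have hvu : v ≠ u := hune.symm
  have harc1 : ∀ w ∈ Arc v u, w ≠ v ∧ w ≠ u := fun w hw =>
    ⟨fun h => self_not_mem_Arc_left (h ▸ hw), fun h => self_not_mem_Arc_right (h ▸ hw)⟩
  have harc2 : ∀ w ∈ Arc u v, w ≠ v ∧ w ≠ u := fun w hw =>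
    ⟨fun h => self_not_mem_Arc_right (h ▸ hw), fun h => self_not_mem_Arc_left (h ▸ hw)⟩
  have h1 : (Arc v u ∩ S) ∪ ((Arc u v ∩ S) ∪ {v, u}) = S := by
    ext w
    simp only [Finset.mem_union, Finset.mem_inter, Finset.mem_insert, Finset.mem_singleton]
    constructor
    · rintro (⟨-, h⟩ | ⟨-, h⟩ | h | h)
      · exact h
      · exact h
      · exact h ▸ hv
      · exact h ▸ hu
    · intro hw
      by_cases hwv : w = v
      · tauto
      by_cases hwu : w = u
      · tauto
      by_cases hmem : w ∈ Arc v u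
      · tauto
      · have := (mem_Arc_rev hvu hwv hwu)
        tauto
  have hd2 : Disjoint (Arc u v ∩ S) ({v, u} : Finset (ZMod n)) := by
    rw [Finset.disjoint_left]
    intro w hw hw2
    rw [Finset.mem_inter] at hw
    rcases Finset.mem_insert.mp hw2 with h | h
    · exact (harc2 w hw.1).1 h
    · exact (harc2 w hw.1).2 (Finset.mem_singleton.mp h)
  have hd1 : Disjoint (Arc v u ∩ S) ((Arc u v ∩ S) ∪ {v, u}) := by
    rw [Finset.disjoint_left]
    intro w hw hw2
    rw [Finset.mem_inter] at hw
    have hwv := (harc1 w hw.1).1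
    have hwu := (harc1 w hw.1).2
    rcases Finset.mem_union.mp hw2 with h | h
    · exact ((mem_Arc_rev hvu hwv hwu).mp hw.1) (Finset.mem_inter.mp h).1
    · rcases Finset.mem_insert.mp h with h | h
      · exact hwv h
      · exact hwu (Finset.mem_singleton.mp h)
  have := congrArg Finset.card h1
  rw [Finset.card_union_of_disjoint hd1, Finset.card_union_of_disjoint hd2,
    Finset.card_pair hvu] at this
  rw [rk, crk]; omega

end Rank

section Graph
variable [NeZero n] (k : ℕ) (E : SimpleGraph (ZMod n))

/-- A crossing family witnessing maximality for the non-edge `{a,b}`, inside `S`. -/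
def Fam (S : Finset (ZMod n)) (a b : ZMod n) : Prop :=
  ∃ c d : Fin (k + 1) → ZMod n,
    (∀ p, c p ∈ S) ∧ (∀ p, d p ∈ S) ∧ (∀ p, E.Adj (c p) (d p)) ∧
    (∀ p, Crosses a b (c p) (d p)) ∧ (∀ p, Crosses (c p) (d p) a b) ∧
    (∀ p q, p ≠ q → Crosses (c p) (d p) (c q) (d q))

/-- `E` restricted to `S` is maximal: every non-edge inside `S` has a crossing family in `S`. -/
def MaxOn (S : Finset (ZMod n)) : Prop :=
  ∀ a ∈ S, ∀ b ∈ S, a ≠ b → ¬ E.Adj a b → Fam k E S a b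

variable {k E}

/-- F1: chords short on one side (within `S`) are edges. -/
lemma adj_of_short {S : Finset (ZMod n)} (hM : MaxOn k E S) {v u : ZMod n}
    (hv : v ∈ S) (hu : u ∈ S) (hvu : v ≠ u)
    (h : (Arc v u ∩ S).card ≤ k ∨ (Arc u v ∩ S).card ≤ k) : E.Adj v u := by
  by_contra hadj
  obtain ⟨c, d, hcS, hdS, hadj', hcr1, hcr2, hpw⟩ := hM v hv u hu hvu hadj
  have := crossing_bound (m := k + 1) (x := v) (y := u) (S := S)
    (fun p => (c p, d p)) (fun p => ⟨hcS p, hdS p⟩) hcr1 hpw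
  omega

/-- Key degree lemma: an edge at a low-degree vertex must be short on one side. -/
lemma short_of_adj {S : Finset (ZMod n)} (hM : MaxOn k E S) {v j : ZMod n}
    (hv : v ∈ S) (hdeg : (S.filter fun u => E.Adj v u).card ≤ 2 * k + 2)
    (hj : j ∈ S) (hjv : j ≠ v) (hadj : E.Adj v j) :
    (Arc v j ∩ S).card ≤ k ∨ (Arc j v ∩ S).card ≤ k := by
  by_contra hboth
  push_neg at hboth
  obtain ⟨h1, h2⟩ := hboth
  have hrkj : k + 1 ≤ rk S v j := h1
  have hcrkj : k + 1 ≤ crk S v j := h2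
  have hNsum := rk_add_crk hv hj hjv
  set N := (S.erase v).card with hN
  have hNcard : N = S.card - 1 := by rw [hN, Finset.card_erase_of_mem hv]
  have hScard : 1 ≤ S.card := Finset.card_pos.mpr ⟨v, hv⟩
  have hNbig : 2 * k + 3 ≤ N := by omega
  set A := (S.erase v).filter (fun u => rk S v u ≤ k) with hA
  set B := (S.erase v).filter (fun u => N - 1 - k ≤ rk S v u) with hB
  have hAcard : A.card = k + 1 := by
    have himg : A.image (rk S v) = Finset.range (k + 1) := by
      ext m
      simp only [Finset.mem_image, Finset.mem_range, hA, Finset.mem_filter]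
      constructor
      · rintro ⟨u, ⟨-, hm⟩, rfl⟩; omega
      · intro hm
        have : m ∈ Finset.range N := Finset.mem_range.mpr (by omega)
        rw [← rk_image hv, Finset.mem_image] at this
        obtain ⟨u, hu, hrk⟩ := this
        exact ⟨u, ⟨hu, by omega⟩, hrk⟩
    have := Finset.card_image_of_injOn (s := A) (f := rk S v)
      ((rk_injOn (S := S) (v := v)).mono (by
      intro u hu
      have hu' := Finset.mem_coe.mp hu
      rw [hA, Finset.mem_filter] at hu'
      exact Finset.mem_coe.mpr hu'.1))
    rw [himg, Finset.card_range] at this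
    exact this.symm
  have hBcard : B.card = k + 1 := by
    have himg : B.image (rk S v) = Finset.Ico (N - 1 - k) N := by
      ext m
      simp only [Finset.mem_image, Finset.mem_Ico, hB, Finset.mem_filter]
      constructor
      · rintro ⟨u, ⟨hu, hm⟩, rfl⟩
        rw [Finset.mem_erase] at hu
        exact ⟨hm, rk_lt_N hv hu.2 hu.1⟩
      · intro hm
        have : m ∈ Finset.range N := Finset.mem_range.mpr hm.2
        rw [← rk_image hv, Finset.mem_image] at this
        obtain ⟨u, hu, hrk⟩ := this
        exact ⟨u, ⟨hu, by omega⟩, hrk⟩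
    have := Finset.card_image_of_injOn (s := B) (f := rk S v)
      ((rk_injOn (S := S) (v := v)).mono (by
      intro u hu
      have hu' := Finset.mem_coe.mp hu
      rw [hB, Finset.mem_filter] at hu'
      exact Finset.mem_coe.mpr hu'.1))
    rw [himg, Nat.card_Ico] at this
    omega
  have hAB : Disjoint A B := by
    rw [Finset.disjoint_left]
    intro u huA huB
    rw [hA, Finset.mem_filter] at huA
    rw [hB, Finset.mem_filter] at huB
    omega
  have hjAB : j ∉ A ∪ B := by
    intro hmem
    have hcrk_eq : rk S v j + crk S v j + 1 = N := by omega
    rcases Finset.mem_union.mp hmem with h | h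
    · rw [hA, Finset.mem_filter] at h; omega
    · rw [hB, Finset.mem_filter] at h; omega
  have hsub : insert j (A ∪ B) ⊆ S.filter (fun u => E.Adj v u) := by
    intro u hu
    rcases Finset.mem_insert.mp hu with rfl | hu
    · exact Finset.mem_filter.mpr ⟨hj, hadj⟩
    · rcases Finset.mem_union.mp hu with h | h
      · rw [hA, Finset.mem_filter, Finset.mem_erase] at h
        exact Finset.mem_filter.mpr ⟨h.1.2,
          adj_of_short hM hv h.1.2 h.1.1.symm (Or.inl h.2)⟩
      · rw [hB, Finset.mem_filter, Finset.mem_erase] at h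
        have hcr : crk S v u ≤ k := by
          have := rk_add_crk hv h.1.2 h.1.1
          have := rk_lt_N hv h.1.2 h.1.1
          omega
        exact Finset.mem_filter.mpr ⟨h.1.2,
          adj_of_short hM hv h.1.2 h.1.1.symm (Or.inr hcr)⟩
  have hcard := Finset.card_le_card hsub
  rw [Finset.card_insert_of_notMem hjAB, Finset.card_union_of_disjoint hAB] at hcard
  omega

end Graph

section Graph2
variable [NeZero n] {k : ℕ} {E : SimpleGraph (ZMod n)}

lemma crosses_swap_left {a b c d : ZMod n} (h : Crosses b a c d) : Crosses a b c d := by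
  obtain ⟨hba, hcd, hbc, hbd, hac, had, hxor⟩ := h
  refine ⟨hba.symm, hcd, hac, had, hbc, hbd, ?_⟩
  have h1 : c ∈ Arc a b ↔ c ∉ Arc b a := mem_Arc_rev hba.symm hac.symm hbc.symm
  have h2 : d ∈ Arc a b ↔ d ∉ Arc b a := mem_Arc_rev hba.symm had.symm hbd.symm
  unfold Xor' Xor at hxor ⊢
  tauto

lemma crosses_swap_right {a b c d : ZMod n} (h : Crosses c d b a) : Crosses c d a b := by
  obtain ⟨hcd, hba, hcb, hca, hdb, hda, hxor⟩ := h
  refine ⟨hcd, hba.symm, hca, hcb, hda, hdb, ?_⟩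
  unfold Xor' Xor at hxor ⊢
  tauto

lemma maxOn_univ (hq : QuasiPlanar (k + 2) E) (hmax : MaximalQP (k + 2) E) :
    MaxOn k E (univ : Finset (ZMod n)) := by
  intro a _ b _ hab hnadj
  have h := hmax a b hab hnadj
  rw [QuasiPlanar, not_not] at h
  obtain ⟨f, g, hadj, hpw⟩ := h
  have hEadj : ∀ p, E.Adj (f p) (g p) ∨ ((f p = a ∧ g p = b) ∨ (f p = b ∧ g p = a)) := by
    intro p
    rcases (SimpleGraph.sup_adj _ _ _ _).mp (hadj p) with h | h
    · exact Or.inl h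
    · right
      rw [SimpleGraph.fromEdgeSet_adj] at h
      obtain ⟨hs, -⟩ := h
      rw [Set.mem_singleton_iff, Sym2.eq_iff] at hs
      exact hs
  have hex : ∃ p₀, ¬ E.Adj (f p₀) (g p₀) := by
    by_contra hno
    push_neg at hno
    exact hq ⟨f, g, hno, hpw⟩
  obtain ⟨p₀, hp₀⟩ := hex
  have hcase := (hEadj p₀).resolve_left hp₀
  set c : Fin (k + 1) → ZMod n := fun i => f (p₀.succAbove i) with hc
  set d : Fin (k + 1) → ZMod n := fun i => g (p₀.succAbove i) with hd
  have hne : ∀ i : Fin (k + 1), p₀.succAbove i ≠ p₀ := fun i => Fin.succAbove_ne p₀ i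
  have hcr : ∀ i, Crosses (f p₀) (g p₀) (c i) (d i) := fun i => hpw p₀ _ (hne i).symm
  have hcr' : ∀ i, Crosses (c i) (d i) (f p₀) (g p₀) := fun i => hpw _ p₀ (hne i)
  have hadjE : ∀ i, E.Adj (c i) (d i) := by
    intro i
    refine (hEadj _).resolve_right ?_
    obtain ⟨-, -, h1, h2, h3, h4, -⟩ := hcr i
    rintro (⟨ha', hb'⟩ | ⟨ha', hb'⟩) <;>
      rcases hcase with ⟨hfa, hgb⟩ | ⟨hfa, hgb⟩
    · exact h1 (hfa.trans ha'.symm)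
    · exact h3 (hgb.trans ha'.symm)
    · exact h2 (hfa.trans hb'.symm)
    · exact h1 (hfa.trans ha'.symm)
  refine ⟨c, d, fun _ => mem_univ _, fun _ => mem_univ _, hadjE, ?_, ?_, ?_⟩
  · intro i
    rcases hcase with ⟨hfa, hgb⟩ | ⟨hfa, hgb⟩
    · have := hcr i; rwa [hfa, hgb] at this
    · have := hcr i; rw [hfa, hgb] at this; exact crosses_swap_left this
  · intro i
    rcases hcase with ⟨hfa, hgb⟩ | ⟨hfa, hgb⟩
    · have := hcr' i; rwa [hfa, hgb] at this
    · have := hcr' i; rw [hfa, hgb] at this; exact crosses_swap_right this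
  · intro i j hij
    exact hpw _ _ (fun h => hij (Fin.succAbove_right_injective h))

lemma maxOn_erase {S : Finset (ZMod n)} (hM : MaxOn k E S) {v : ZMod n} (hv : v ∈ S)
    (hdeg : (S.filter fun u => E.Adj v u).card ≤ 2 * k + 2) :
    MaxOn k E (S.erase v) := by
  intro a ha b hb hab hnadj
  have haS := Finset.mem_of_mem_erase ha
  have hbS := Finset.mem_of_mem_erase hb
  obtain ⟨c, d, hcS, hdS, hadjE, hcr1, hcr2, hpw⟩ := hM a haS b hbS hab hnadj
  have key : ∀ p, c p ≠ v ∧ d p ≠ v := by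
    intro p
    -- the crossing bound for the chord (c p, d p)
    have hbnd : k + 1 ≤ (Arc (c p) (d p) ∩ S).card ∧ k + 1 ≤ (Arc (d p) (c p) ∩ S).card := by
      set e : Fin (k + 1) → ZMod n × ZMod n :=
        fun q => if q = p then (a, b) else (c q, d q) with he
      refine crossing_bound e ?_ ?_ ?_
      · intro q
        by_cases h : q = p
        · simp only [he, if_pos h]; exact ⟨haS, hbS⟩
        · simp only [he, if_neg h]; exact ⟨hcS q, hdS q⟩
      · intro q
        by_cases h : q = p
        · subst h; simp only [he, if_pos rfl]; exact hcr2 q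
        · simp only [he, if_neg h]; exact hpw p q (fun hh => h hh.symm)
      · intro q r hqr
        by_cases h1 : q = p <;> by_cases h2 : r = p
        · exact absurd (h1.trans h2.symm) hqr
        · subst h1; simp only [he, if_pos rfl, if_neg h2]; exact hcr1 r
        · subst h2; simp only [he, if_pos rfl, if_neg h1]; exact hcr2 q
        · simp only [he, if_neg h1, if_neg h2]; exact hpw q r hqr
    have hcd : c p ≠ d p := (hcr1 p).2.1
    constructor
    · rintro rfl
      have hshort := short_of_adj hM hv hdeg (hdS p) (fun h => hcd h.symm) (hadjE p)
      omega
    · rintro rfl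
      have hshort := short_of_adj hM hv hdeg (hcS p) hcd ((hadjE p).symm)
      omega
  refine ⟨c, d, fun p => Finset.mem_erase.mpr ⟨(key p).1, hcS p⟩,
    fun p => Finset.mem_erase.mpr ⟨(key p).2, hdS p⟩, hadjE, hcr1, hcr2, hpw⟩

end Graph2

section Lists
variable {α : Type*} [DecidableEq α]

lemma mem_drop_iff_indexOf {L : List α} (hnd : L.Nodup) {u : α} (hu : u ∈ L) :
    ∀ t, u ∈ L.drop t ↔ t ≤ L.idxOf u := by
  induction L with
  | nil => simp at hu
  | cons a L' ih =>
    intro t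
    cases t with
    | zero => simp [hu]
    | succ t =>
      rw [List.drop_succ_cons]
      by_cases h : u = a
      · subst h
        rw [List.idxOf_cons_self]
        simp only [Nat.le_zero, Nat.succ_ne_zero, iff_false]
        intro hmem
        exact (List.nodup_cons.mp hnd).1 (List.mem_of_mem_drop hmem)
      · have hu' : u ∈ L' := by
          rcases List.mem_cons.mp hu with h' | h'
          · exact absurd h' h
          · exact h'
        rw [List.idxOf_cons_ne _ (fun hh => h hh.symm), ih (List.nodup_cons.mp hnd).2 hu' t]
        omega
  
end Lists

section Peel
variable [NeZero n] {k : ℕ} {E : SimpleGraph (ZMod n)}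

lemma exists_peel
    (hdeg : ∀ S : Finset (ZMod n), S.Nonempty →
        ∃ v ∈ S, (S.filter fun u => E.Adj v u).card ≤ 2 * k + 2) (S : Finset (ZMod n)) :
    ∃ L : List (ZMod n), L.Nodup ∧ L.toFinset = S ∧
      ∀ (l₁ : List (ZMod n)) (v : ZMod n) (l₂ : List (ZMod n)), L = l₁ ++ v :: l₂ →
        (((v :: l₂).toFinset).filter fun u => E.Adj v u).card ≤ 2 * k + 2 := by
  induction S using Finset.strongInduction with
  | _ S ih =>
    rcases S.eq_empty_or_nonempty with rfl | hS
    · refine ⟨[], List.nodup_nil, by simp, ?_⟩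
      intro l₁ v l₂ h
      exact absurd (congrArg List.length h) (by simp)
    · obtain ⟨v, hv, hdv⟩ := hdeg S hS
      obtain ⟨L', hnd, htf, hprop⟩ := ih (S.erase v) (Finset.erase_ssubset hv)
      have hvL' : v ∉ L' := by
        rw [← List.mem_toFinset, htf]
        simp
      refine ⟨v :: L', List.nodup_cons.mpr ⟨hvL', hnd⟩, ?_, ?_⟩
      · rw [List.toFinset_cons, htf, Finset.insert_erase hv]
      · rintro l₁ w l₂ h
        cases l₁ with
        | nil =>
          simp only [List.nil_append] at h
          obtain ⟨rfl, rfl⟩ := List.cons.inj h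
          have hfin : (v :: L').toFinset = S := by
            rw [List.toFinset_cons, htf, Finset.insert_erase hv]
          rw [hfin]
          exact hdv
        | cons x l₁' =>
          rw [List.cons_append] at h
          obtain ⟨-, h2⟩ := List.cons.inj h
          exact hprop l₁' w l₂ h2

theorem stmt12aux (k : ℕ) [NeZero n] (E : SimpleGraph (ZMod n))
    (hq : QuasiPlanar (k + 2) E) (hmax : MaximalQP (k + 2) E)
    (hdeg : ∀ S : Finset (ZMod n), S.Nonempty →
        ∃ v ∈ S, (S.filter fun u => E.Adj v u).card ≤ 2 * k + 2) :
    ∃ ℓ : ZMod n → ℝ, Function.Injective ℓ ∧ ∀ i j : ZMod n,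
      E.Adj i j ↔ (i ≠ j ∧ (exceedCount ℓ i j ≤ k ∨ exceedCount ℓ j i ≤ k)) := by
  classical
  obtain ⟨L, hnd, htf, hprop⟩ := exists_peel hdeg (univ : Finset (ZMod n))
  have hall : ∀ u : ZMod n, u ∈ L := fun u => by
    rw [← List.mem_toFinset, htf]; exact mem_univ u
  set ℓ : ZMod n → ℝ := fun u => (L.idxOf u : ℝ) with hℓ
  have hidx : ∀ u u' : ZMod n, L.idxOf u = L.idxOf u' → u = u' :=
    fun u u' h => (List.idxOf_inj (hall u)).mp h
  have hinj : Function.Injective ℓ := by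
    intro u u' h
    exact hidx u u' (Nat.cast_injective h)
  refine ⟨ℓ, hinj, ?_⟩
  have hlevel : ∀ t : ℕ, MaxOn k E ((L.drop t).toFinset) := by
    intro t
    induction t with
    | zero =>
      rw [List.drop_zero, htf]
      exact maxOn_univ hq hmax
    | succ t iht =>
      by_cases ht : t < L.length
      · have hdropeq : L.drop t = L[t] :: L.drop (t + 1) := List.drop_eq_getElem_cons ht
        have hndt : (L.drop t).Nodup := List.Nodup.sublist (List.drop_sublist t L) hnd
        have hnotmem : L[t] ∉ L.drop (t + 1) := by
          rw [hdropeq] at hndt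
          exact (List.nodup_cons.mp hndt).1
        have hvS : L[t] ∈ (L.drop t).toFinset := by
          rw [List.mem_toFinset, hdropeq]
          exact List.mem_cons_self
        have hdegv : (((L.drop t).toFinset).filter fun u => E.Adj L[t] u).card ≤ 2 * k + 2 := by
          have hsplit : L = L.take t ++ L[t] :: L.drop (t + 1) := by
            conv_lhs => rw [← List.take_append_drop t L]
            rw [hdropeq]
          have h := hprop (L.take t) L[t] (L.drop (t + 1)) hsplit
          rwa [show (L[t] :: L.drop (t + 1)).toFinset = (L.drop t).toFinset by rw [hdropeq]] at h
        have herase : ((L.drop t).toFinset).erase L[t] = (L.drop (t + 1)).toFinset := by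
          rw [hdropeq, List.toFinset_cons, Finset.erase_insert (by
            rw [List.mem_toFinset]; exact hnotmem)]
        rw [← herase]
        exact maxOn_erase iht hvS hdegv
      · have h0 : (L.drop (t + 1)).toFinset = (∅ : Finset (ZMod n)) := by
          rw [List.drop_eq_nil_of_le (by omega), List.toFinset_nil]
        rw [h0]
        intro a ha
        exact absurd ha (Finset.notMem_empty a)
  have key : ∀ i j : ZMod n, L.idxOf i < L.idxOf j →
      (E.Adj i j ↔ ((Arc i j ∩ (L.drop (L.idxOf i)).toFinset).card ≤ k ∨
        (Arc j i ∩ (L.drop (L.idxOf i)).toFinset).card ≤ k)) := by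
    intro i j hij
    have hne : i ≠ j := fun h => by rw [h] at hij; omega
    set t := L.idxOf i with ht
    set S := (L.drop t).toFinset with hS
    have htlen : t < L.length := List.idxOf_lt_length_iff.mpr (hall i)
    have hgetl : L[t] = i := List.getElem_idxOf htlen
    have hiS : i ∈ S := by
      rw [hS, List.mem_toFinset, mem_drop_iff_indexOf hnd (hall i)]
    have hjS : j ∈ S := by
      rw [hS, List.mem_toFinset, mem_drop_iff_indexOf hnd (hall j)]
      omega
    have hdegv : (S.filter fun u => E.Adj i u).card ≤ 2 * k + 2 := by
      have hdropeq : L.drop t = i :: L.drop (t + 1) := by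
        rw [List.drop_eq_getElem_cons htlen, hgetl]
      have hsplit : L = L.take t ++ i :: L.drop (t + 1) := by
        conv_lhs => rw [← List.take_append_drop t L]
        rw [hdropeq]
      have h := hprop (L.take t) i (L.drop (t + 1)) hsplit
      rwa [show (i :: L.drop (t + 1)).toFinset = S by rw [hS, hdropeq]] at h
    exact ⟨fun h => short_of_adj (hlevel t) hiS hdegv hjS hne.symm h,
      fun h => adj_of_short (hlevel t) hiS hjS hne h⟩
  have harc : ∀ i j : ZMod n, L.idxOf i < L.idxOf j →
      ∀ X : Finset (ZMod n), i ∉ X →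
      (X.filter fun u => min (ℓ i) (ℓ j) < ℓ u) = X ∩ (L.drop (L.idxOf i)).toFinset := by
    intro i j hij X hiX
    have hminv : min (ℓ i) (ℓ j) = ℓ i := min_eq_left (by
      simp only [hℓ]
      exact_mod_cast hij.le)
    ext u
    rw [Finset.mem_filter, Finset.mem_inter, hminv, List.mem_toFinset,
      mem_drop_iff_indexOf hnd (hall u)]
    simp only [hℓ]
    constructor
    · rintro ⟨hu, hlt⟩
      have : L.idxOf i < L.idxOf u := by exact_mod_cast hlt
      exact ⟨hu, this.le⟩
    · rintro ⟨hu, hle⟩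
      refine ⟨hu, ?_⟩
      have hnei : u ≠ i := fun h => hiX (h ▸ hu)
      have : L.idxOf u ≠ L.idxOf i := fun h => hnei (hidx u i h)
      have : L.idxOf i < L.idxOf u := by omega
      exact_mod_cast this
  have keyfull : ∀ i j : ZMod n, L.idxOf i < L.idxOf j →
      (E.Adj i j ↔ (exceedCount ℓ i j ≤ k ∨ exceedCount ℓ j i ≤ k)) := by
    intro i j hij
    have e1 : exceedCount ℓ i j = (Arc i j ∩ (L.drop (L.idxOf i)).toFinset).card := by
      rw [exceedCount, harc i j hij _ self_not_mem_Arc_left]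
    have e2 : exceedCount ℓ j i = (Arc j i ∩ (L.drop (L.idxOf i)).toFinset).card := by
      rw [exceedCount, min_comm, harc i j hij _ self_not_mem_Arc_right]
    rw [e1, e2]
    exact key i j hij
  intro i j
  by_cases hij : i = j
  · subst hij
    simp only [ne_eq, not_true_eq_false, false_and, iff_false]
    exact E.irrefl
  · have hidxne : L.idxOf i ≠ L.idxOf j := fun h => hij (hidx i j h)
    rcases Nat.lt_or_ge (L.idxOf i) (L.idxOf j) with hlt | hge
    · rw [keyfull i j hlt]
      tauto
    · have hlt : L.idxOf j < L.idxOf i := by omega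
      rw [E.adj_comm, keyfull j i hlt]
      tauto


end Peel

/-- every `(2k+2)`-degenerate graph with a maximal `(k+2)`-quasiplanar convex
geometric representation has a cylindrical semi-bar `k`-visibility representation with
semi-bars of different lengths, preserving the cyclic order of the vertices. -/
theorem stmt12 (k : ℕ) [NeZero n] (E : SimpleGraph (ZMod n))
    (hq : QuasiPlanar (k + 2) E) (hmax : MaximalQP (k + 2) E)
    (hdeg : ∀ S : Finset (ZMod n), S.Nonempty →
        ∃ v ∈ S, (S.filter fun u => E.Adj v u).card ≤ 2 * k + 2) :
    ∃ ℓ : ZMod n → ℝ, Function.Injective ℓ ∧ E = CylGraph k ℓ := by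
  obtain ⟨ℓ, hinj, hiff⟩ := stmt12aux k E hq hmax hdeg
  refine ⟨ℓ, hinj, ?_⟩
  ext i j
  exact hiff i j
end
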